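/- Let K ≥ 1 be an integer, λ > L, R₁ ≥ 0, G_c ≥ 0, and let Q ∈ ℝ^{r×r} be orthogonal. Let U* ∈ ℝ^{n×r} with ‖U*‖_F² = K, and suppose g(U*) = −2(λ−L)U* + N where N ∈ ℝ^{n×r} vanishes on the support of U* (i.e., N_{iτ} = 0 whenever (U*)_{iτ} ≠ 0) and ‖N‖_F ≤ G_c. Let U ∈ ℝ^{n×r} with ‖U‖_F² = K, and suppose ‖g(U) − g(U*Q)‖_F ≤ R₁‖U − U*Q‖_F and ‖U − U*Q‖_F ≤ (λ−L)√K / ( 2( √K·R₁ + 2(λ−L)√K + G_c ) ). Then ⟨g(U), U⟩ < −(λ−L)K/2. -/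

import Mathlib

open Matrix Finset

/-- The all-ones vector in `ℝ^n`. -/
noncomputable def ones (n : ℕ) : Fin n → ℝ := fun _ => 1

/-- Frobenius norm of a real matrix. -/
noncomputable def frob {m r : ℕ} (M : Matrix (Fin m) (Fin r) ℝ) : ℝ :=
  Real.sqrt (∑ i, ∑ j, (M i j) ^ 2)

/-- Trace (Frobenius) inner product of two real matrices. -/
noncomputable def matInner {m r : ℕ} (M N : Matrix (Fin m) (Fin r) ℝ) : ℝ :=
  ∑ i, ∑ j, M i j * N i j

/-- The gradient map `g(U) = (2A + 2L·I + 1 ȳᵀ + ȳ 1ᵀ) U`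
with `ȳ = y + β(UUᵀ1 − 1)`. -/
noncomputable def gradLag {n r : ℕ} (A : Matrix (Fin n) (Fin n) ℝ) (y : Fin n → ℝ)
    (L β : ℝ) (U : Matrix (Fin n) (Fin r) ℝ) : Matrix (Fin n) (Fin r) ℝ :=
  ((2 : ℝ) • A + (2 * L) • (1 : Matrix (Fin n) (Fin n) ℝ)
    + Matrix.vecMulVec (ones n) (y + β • ((U * Uᵀ).mulVec (ones n) - ones n))
    + Matrix.vecMulVec (y + β • ((U * Uᵀ).mulVec (ones n) - ones n)) (ones n)) * U

noncomputable def toE {m r : ℕ} (M : Matrix (Fin m) (Fin r) ℝ) :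
    EuclideanSpace ℝ (Fin m × Fin r) := WithLp.toLp 2 (fun p => M p.1 p.2)

lemma toE_add {m r : ℕ} (M N : Matrix (Fin m) (Fin r) ℝ) : toE (M + N) = toE M + toE N := rfl
lemma toE_sub {m r : ℕ} (M N : Matrix (Fin m) (Fin r) ℝ) : toE (M - N) = toE M - toE N := rfl
lemma toE_smul {m r : ℕ} (c : ℝ) (M : Matrix (Fin m) (Fin r) ℝ) : toE (c • M) = c • toE M := rfl

lemma frob_nonneg {m r : ℕ} (M : Matrix (Fin m) (Fin r) ℝ) : 0 ≤ frob M := Real.sqrt_nonneg _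

lemma frob_eq_norm {m r : ℕ} (M : Matrix (Fin m) (Fin r) ℝ) : frob M = ‖toE M‖ := by
  rw [EuclideanSpace.norm_eq, frob]
  congr 1
  rw [Fintype.sum_prod_type]
  exact Finset.sum_congr rfl fun p _ => by simp [toE, Real.norm_eq_abs, sq_abs]

lemma matInner_eq_inner {m r : ℕ} (M N : Matrix (Fin m) (Fin r) ℝ) :
    matInner M N = inner ℝ (toE M) (toE N) := by
  rw [matInner, PiLp.inner_apply, Fintype.sum_prod_type]
  exact Finset.sum_congr rfl fun p _ => by simp [toE, RCLike.inner_apply, mul_comm]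

lemma matInner_eq_trace {m r : ℕ} (M N : Matrix (Fin m) (Fin r) ℝ) :
    matInner M N = Matrix.trace (M * Nᵀ) := by
  simp [matInner, Matrix.trace, Matrix.diag, Matrix.mul_apply]

lemma matInner_mul_orth {m r : ℕ} (M P : Matrix (Fin m) (Fin r) ℝ)
    (Q : Matrix (Fin r) (Fin r) ℝ) (hQ : Q * Qᵀ = 1) :
    matInner (M * Q) (P * Q) = matInner M P := by
  rw [matInner_eq_trace, matInner_eq_trace, Matrix.transpose_mul,
    Matrix.mul_assoc, ← Matrix.mul_assoc Q, hQ, Matrix.one_mul]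

lemma frob_sq {m r : ℕ} (M : Matrix (Fin m) (Fin r) ℝ) : frob M ^ 2 = matInner M M := by
  rw [frob_eq_norm, matInner_eq_inner, real_inner_self_eq_norm_sq]

lemma gradLag_mul_orth {n r : ℕ} (A : Matrix (Fin n) (Fin n) ℝ) (y : Fin n → ℝ)
    (L β : ℝ) (U : Matrix (Fin n) (Fin r) ℝ) (Q : Matrix (Fin r) (Fin r) ℝ)
    (hQ : Q * Qᵀ = 1) :
    gradLag A y L β (U * Q) = gradLag A y L β U * Q := by
  have key : (U * Q) * (U * Q)ᵀ = U * Uᵀ := by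
    rw [Matrix.transpose_mul, Matrix.mul_assoc, ← Matrix.mul_assoc Q, hQ, Matrix.one_mul]
  unfold gradLag
  rw [key, ← Matrix.mul_assoc]

/-- Strict negativity of `⟨g(U), U⟩` near the optimal orbit: if
`‖U*‖_F² = K`, `g(U*) = −2(λ−L)U* + N` with `N` vanishing on the support of `U*` and
`‖N‖_F ≤ G_c`, `Q` is orthogonal, `‖U‖_F² = K`,
`‖g(U) − g(U*Q)‖_F ≤ R₁‖U − U*Q‖_F`, and
`‖U − U*Q‖_F ≤ (λ−L)√K/(2(√K·R₁ + 2(λ−L)√K + G_c))`, then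
`⟨g(U), U⟩ < −(λ−L)K/2`. -/
theorem grad_inner_negative_near_optimum {n r K : ℕ} (hK : 1 ≤ K)
    (A : Matrix (Fin n) (Fin n) ℝ) (hA : Aᵀ = A)
    (y : Fin n → ℝ) (L β lam R₁ Gc : ℝ)
    (hlamL : L < lam) (hR₁ : 0 ≤ R₁) (hGc : 0 ≤ Gc)
    (Q : Matrix (Fin r) (Fin r) ℝ) (hQ₁ : Qᵀ * Q = 1) (hQ₂ : Q * Qᵀ = 1)
    (Ustar : Matrix (Fin n) (Fin r) ℝ)
    (hUstarF : frob Ustar ^ 2 = (K : ℝ))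
    (N : Matrix (Fin n) (Fin r) ℝ)
    (hgUstar : gradLag A y L β Ustar = (-(2 * (lam - L))) • Ustar + N)
    (hNsupp : ∀ i τ, Ustar i τ ≠ 0 → N i τ = 0)
    (hNF : frob N ≤ Gc)
    (U : Matrix (Fin n) (Fin r) ℝ)
    (hUF : frob U ^ 2 = (K : ℝ))
    (hlip : frob (gradLag A y L β U - gradLag A y L β (Ustar * Q)) ≤
      R₁ * frob (U - Ustar * Q))
    (hclose : frob (U - Ustar * Q) ≤
      (lam - L) * Real.sqrt K /
        (2 * (Real.sqrt K * R₁ + 2 * (lam - L) * Real.sqrt K + Gc))) :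
    matInner (gradLag A y L β U) U < -(lam - L) * K / 2 := by
  set a := lam - L with ha
  have ha0 : 0 < a := by rw [ha]; linarith
  have hK1 : (1 : ℝ) ≤ (K : ℝ) := by exact_mod_cast hK
  set s := Real.sqrt (K : ℝ) with hs
  have hsK : s ^ 2 = (K : ℝ) := Real.sq_sqrt (by positivity)
  have hs1 : 1 ≤ s := by
    have h := Real.sqrt_le_sqrt hK1
    rwa [Real.sqrt_one] at h
  have hs0 : 0 < s := lt_of_lt_of_le one_pos hs1
  have hsleK : s ≤ (K : ℝ) := by nlinarith [sq_nonneg (s - 1)]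
  -- Frobenius norms of U and Ustar
  have hfU : frob U = s := by rw [hs, ← hUF, Real.sqrt_sq (frob_nonneg U)]
  have hfUstar : frob Ustar = s := by rw [hs, ← hUstarF, Real.sqrt_sq (frob_nonneg Ustar)]
  -- gradient at Ustar * Q
  have hgQ : gradLag A y L β (Ustar * Q) = gradLag A y L β Ustar * Q :=
    gradLag_mul_orth A y L β Ustar Q hQ₂
  -- inner product at optimum
  have hNU : matInner N Ustar = 0 := by
    unfold matInner
    refine Finset.sum_eq_zero fun i _ => Finset.sum_eq_zero fun τ _ => ?_
    by_cases h : Ustar i τ = 0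
    · simp [h]
    · simp [hNsupp i τ h]
  have hstar : matInner (gradLag A y L β Ustar) Ustar = -(2 * a) * (K : ℝ) := by
    rw [hgUstar, matInner_eq_inner, toE_add, toE_smul, inner_add_left,
      real_inner_smul_left, ← matInner_eq_inner, ← matInner_eq_inner, hNU, ← frob_sq,
      hUstarF]
    ring
  have hstarQ : matInner (gradLag A y L β (Ustar * Q)) (Ustar * Q) = -(2 * a) * (K : ℝ) := by
    rw [hgQ, matInner_mul_orth _ _ _ hQ₂, hstar]
  -- bound on frob of gradient at Ustar
  have hgs : frob (gradLag A y L β Ustar) ≤ 2 * a * s + Gc := by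
    rw [hgUstar, frob_eq_norm, toE_add, toE_smul]
    calc ‖(-(2 * a)) • toE Ustar + toE N‖
        ≤ ‖(-(2 * a)) • toE Ustar‖ + ‖toE N‖ := norm_add_le _ _
      _ = |(-(2 * a))| * ‖toE Ustar‖ + ‖toE N‖ := by rw [norm_smul, Real.norm_eq_abs]
      _ ≤ 2 * a * s + Gc := by
          rw [abs_neg, abs_of_pos (by linarith), ← frob_eq_norm, ← frob_eq_norm, hfUstar]
          have := hNF
          linarith
  have hgsQ : frob (gradLag A y L β (Ustar * Q)) ≤ 2 * a * s + Gc := by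
    rw [hgQ]
    have h1 : frob (gradLag A y L β Ustar * Q) ^ 2 = frob (gradLag A y L β Ustar) ^ 2 := by
      rw [frob_sq, frob_sq, matInner_mul_orth _ _ _ hQ₂]
    have h2 : frob (gradLag A y L β Ustar * Q) = frob (gradLag A y L β Ustar) := by
      rw [← Real.sqrt_sq (frob_nonneg (gradLag A y L β Ustar * Q)), h1,
        Real.sqrt_sq (frob_nonneg _)]
    rw [h2]; exact hgs
  set d := frob (U - Ustar * Q) with hd
  have hd0 : 0 ≤ d := frob_nonneg _
  set S := s * R₁ + 2 * a * s + Gc with hS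
  have hS0 : 0 < S := by
    have h1 : 0 ≤ s * R₁ := mul_nonneg (le_of_lt hs0) hR₁
    have h2 : 0 < 2 * a * s := by positivity
    rw [hS]; linarith
  have hdS : d * S ≤ a * s / 2 := by
    have h := mul_le_mul_of_nonneg_right hclose (le_of_lt hS0)
    have h2 : a * s / (2 * S) * S = a * s / 2 := by
      have hSne : S ≠ 0 := ne_of_gt hS0
      field_simp
    rw [h2] at h
    exact h
  -- decomposition
  have hdecomp : matInner (gradLag A y L β U) U =
      matInner (gradLag A y L β U - gradLag A y L β (Ustar * Q)) U
      + matInner (gradLag A y L β (Ustar * Q)) (U - Ustar * Q)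
      + matInner (gradLag A y L β (Ustar * Q)) (Ustar * Q) := by
    simp only [matInner_eq_inner, toE_sub, inner_sub_left, inner_sub_right]
    ring
  have hb1 : matInner (gradLag A y L β U - gradLag A y L β (Ustar * Q)) U ≤ R₁ * d * s := by
    rw [matInner_eq_inner]
    calc inner ℝ (toE (gradLag A y L β U - gradLag A y L β (Ustar * Q))) (toE U)
        ≤ ‖toE (gradLag A y L β U - gradLag A y L β (Ustar * Q))‖ * ‖toE U‖ :=
          real_inner_le_norm _ _
      _ ≤ R₁ * d * s := by
          rw [← frob_eq_norm, ← frob_eq_norm, hfU]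
          exact mul_le_mul_of_nonneg_right hlip (le_of_lt hs0)
  have hb2 : matInner (gradLag A y L β (Ustar * Q)) (U - Ustar * Q) ≤ (2 * a * s + Gc) * d := by
    rw [matInner_eq_inner]
    calc inner ℝ (toE (gradLag A y L β (Ustar * Q))) (toE (U - Ustar * Q))
        ≤ ‖toE (gradLag A y L β (Ustar * Q))‖ * ‖toE (U - Ustar * Q)‖ :=
          real_inner_le_norm _ _
      _ ≤ (2 * a * s + Gc) * d := by
          rw [← frob_eq_norm, ← frob_eq_norm, ← hd]
          exact mul_le_mul_of_nonneg_right hgsQ hd0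
  have hle : matInner (gradLag A y L β U) U ≤ -(2 * a) * (K : ℝ) + d * S := by
    rw [hdecomp, hstarQ, hS]
    linarith [hb1, hb2]
  have haK : 0 < a * (K : ℝ) := by positivity
  have has : a * s ≤ a * (K : ℝ) := mul_le_mul_of_nonneg_left hsleK (le_of_lt ha0)
  clear_value a s d S
  calc matInner (gradLag A y L β U) U ≤ -(2 * a) * (K : ℝ) + d * S := hle
    _ ≤ -(2 * a) * (K : ℝ) + a * s / 2 := by linarith
    _ < -a * (K : ℝ) / 2 := by linarith
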